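/- arXiv:1711.05305 — 2 statements merged into one kernel-verified Lean document; each statement's English description precedes it below -/
import Mathlib

section
/- The sequence (θ_t) with θ_0 = 1 and θ_{t+1} the positive root of θ² + (γθ_t²)θ − θ_t² = 0 satisfies θ_t ≤ 2/(tγ + 2) ≤ 1 for all t ≥ 0. -/
set_option maxHeartbeats 1000000


theorem stmt_3 (γ : ℝ) (hγ : 0 < γ) (hγ1 : γ ≤ 1) (θ : ℕ → ℝ) (h0 : θ 0 = 1)
    (hrec : ∀ t, θ (t + 1) = (Real.sqrt (γ^2 * (θ t)^4 + 4 * (θ t)^2) - γ * (θ t)^2) / 2) :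
    ∀ t : ℕ, θ t ≤ 2 / (t * γ + 2) ∧ 2 / (t * γ + 2) ≤ 1 := by
  have key : ∀ t : ℕ, 0 < θ t ∧ θ t ≤ 2 / (t * γ + 2) := by
    intro t
    induction t with
    | zero => simp [h0]
    | succ t ih =>
      obtain ⟨ha, hb⟩ := ih
      set a := θ t with hadef
      have htn : (0:ℝ) ≤ (t:ℝ) := Nat.cast_nonneg t
      have he : (2:ℝ) ≤ (t:ℝ) * γ + 2 := by nlinarith [mul_nonneg htn hγ.le]
      set e : ℝ := (t:ℝ) * γ + 2 with hedef
      have hepos : 0 < e := by linarith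
      have hae : a * e ≤ 2 := by
        have := (le_div_iff₀ hepos).mp hb; linarith
      have hS : (γ * a^2)^2 < γ^2 * a^4 + 4 * a^2 := by nlinarith [sq_nonneg a, mul_pos ha ha]
      have hsq : γ * a^2 < Real.sqrt (γ^2 * a^4 + 4 * a^2) := by
        have h1 : 0 ≤ γ * a^2 := by positivity
        exact (Real.lt_sqrt h1).mpr hS
      have hpos1 : 0 < θ (t + 1) := by
        rw [hrec t, ← hadef]; linarith
      constructor
      · exact hpos1
      · rw [hrec t, ← hadef]
        have hcast : ((t+1 : ℕ) : ℝ) * γ + 2 = e + γ := by push_cast; ring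
        rw [hcast]
        have hegpos : 0 < e + γ := by linarith
        have hae2 : a^2 * e^2 ≤ 4 := by nlinarith [mul_pos ha hepos]
        have hsqle : Real.sqrt (γ^2 * a^4 + 4 * a^2) ≤ γ * a^2 + 4 / (e + γ) := by
          have hrhs : 0 ≤ γ * a^2 + 4 / (e + γ) := by positivity
          have hkey : γ^2 * a^4 + 4 * a^2 ≤ (γ * a^2 + 4 / (e + γ))^2 := by
            have hu : (4 / (e + γ)) * (e + γ) = 4 := by field_simp
            set u := 4 / (e + γ) with hudef
            have hupos : 0 < u := by positivity
            have hu2 : (u * (e + γ))^2 = 16 := by rw [hu]; norm_num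
            have hu3 : u * (e + γ)^2 = 4 * (e + γ) := by
              have : u * (e + γ)^2 = (u * (e + γ)) * (e + γ) := by ring
              rw [this, hu]
            have hsq2 : (0:ℝ) < (e + γ)^2 := by positivity
            have hmul : (4 * a^2) * (e + γ)^2 ≤ (2 * γ * a^2 * u + u^2) * (e + γ)^2 := by
              nlinarith [hae2, mul_pos (mul_pos ha ha) (mul_pos hγ hγ)]
            have hfin : 4 * a^2 ≤ 2 * γ * a^2 * u + u^2 :=
              le_of_mul_le_mul_right hmul hsq2
            nlinarith [hfin]
          calc Real.sqrt (γ^2 * a^4 + 4 * a^2) ≤ Real.sqrt ((γ * a^2 + 4 / (e + γ))^2) :=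
                Real.sqrt_le_sqrt hkey
            _ = γ * a^2 + 4 / (e + γ) := Real.sqrt_sq hrhs
        have : (Real.sqrt (γ^2 * a^4 + 4 * a^2) - γ * a^2) / 2 ≤ (4 / (e + γ)) / 2 := by
          linarith
        calc (Real.sqrt (γ^2 * a^4 + 4 * a^2) - γ * a^2) / 2 ≤ (4 / (e + γ)) / 2 := this
          _ = 2 / (e + γ) := by ring
  intro t
  obtain ⟨hp, hle⟩ := key t
  refine ⟨hle, ?_⟩
  have htn : (0:ℝ) ≤ (t:ℝ) := Nat.cast_nonneg t
  have he : (2:ℝ) ≤ (t:ℝ) * γ + 2 := by linarith [mul_nonneg htn hγ.le]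
  rw [div_le_one (by linarith)]; linarith
end

section
/- If 1/θ_t ≥ (γt + 2)/2 and 1/θ_{t+1}² − γ/θ_{t+1} = 1/θ_t² with θ_{t+1} > 0, then 1/θ_{t+1} ≥ (γ(t+1) + 2)/2. -/
theorem stmt_5 (γ : ℝ) (hγ : 0 < γ) (hγ1 : γ ≤ 1) (t : ℕ) (θt θt1 : ℝ)
    (hθt : 0 < θt) (hθt1 : 0 < θt1)
    (hind : 1 / θt ≥ (γ * t + 2) / 2)
    (hrec : 1 / θt1^2 - γ / θt1 = 1 / θt^2) :
    1 / θt1 ≥ (γ * (t + 1) + 2) / 2 := by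
  set x := 1 / θt1 with hxdef
  have hx : 0 < x := by positivity
  have ht : (0:ℝ) < (γ * t + 2) / 2 := by positivity
  have h1 : 1 / θt^2 ≥ ((γ * t + 2) / 2)^2 := by
    have : 1 / θt^2 = (1 / θt)^2 := by field_simp
    rw [this]
    nlinarith [hind, ht]
  have hx2 : x^2 - γ * x ≥ ((γ * t + 2) / 2)^2 := by
    have hxe : 1 / θt1^2 = x^2 := by rw [hxdef]; field_simp
    have hge : γ / θt1 = γ * x := by rw [hxdef]; field_simp
    nlinarith [hrec, h1]
  have hxg : x > γ / 2 := by nlinarith [hx2, ht, hx]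
  have key : (x - γ/2)^2 ≥ ((γ * t + 2)/2)^2 := by nlinarith [hx2]
  have : x - γ/2 ≥ (γ * t + 2)/2 := by nlinarith [key, ht, hxg]
  push_cast
  linarith
end
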